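/- Let D = (P, B) be a 2-(v,k,λ) design with b blocks and incidence matrix A (the b × v integer matrix with A_{j,i} = 1 if point P_i belongs to block 𝔟_j and 0 otherwise). If the canonical map P → 𝔊_D, X ↦ X + R, is not injective, then there exists an integer vector v ∈ ℤ^b such that v (A Aᵀ) vᵀ = 2. -/

import Mathlib

/-- For a 2-(v,k,λ) design with b blocks and incidence matrix A,
if the canonical map P → 𝔊_D is not injective, then there is an integer vector w
with w (A Aᵀ) wᵀ = 2. -/
theorem stmt_3 (v b k lam : ℕ)
    (bl : Fin b → Finset (Fin v)) (hinj : Function.Injective bl)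
    (hk : ∀ j, (bl j).card = k)
    (hlam : ∀ x y : Fin v, x ≠ y →
      (Finset.univ.filter (fun j => x ∈ bl j ∧ y ∈ bl j)).card = lam)
    (A : Matrix (Fin b) (Fin v) ℤ)
    (hA : A = Matrix.of fun j i => if i ∈ bl j then 1 else 0)
    (R : AddSubgroup (FreeAbelianGroup (Fin v)))
    (hR : R = AddSubgroup.closure
      {g | ∃ j : Fin b, g = ∑ i ∈ bl j, FreeAbelianGroup.of i})
    (hninj : ¬ Function.Injective (fun X : Fin v =>
      (QuotientAddGroup.mk (FreeAbelianGroup.of X) : FreeAbelianGroup (Fin v) ⧸ R))) :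
    ∃ w : Fin b → ℤ,
      dotProduct (Matrix.vecMul w (A * A.transpose)) w = 2 := by
  rw [Function.not_injective_iff] at hninj
  obtain ⟨x, y, hxy, hne⟩ := hninj
  simp only [QuotientAddGroup.eq] at hxy
  -- hxy : -of x + of y ∈ R
  rw [hR] at hxy
  have hset : {g | ∃ j : Fin b, g = ∑ i ∈ bl j, FreeAbelianGroup.of i}
      = Set.range (fun j : Fin b => ∑ i ∈ bl j, FreeAbelianGroup.of i) := by
    ext g; simp [eq_comm]
  rw [hset, ← Submodule.span_int_eq_addSubgroupClosure,
    Submodule.mem_toAddSubgroup, Submodule.mem_span_range_iff_exists_fun] at hxy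
  obtain ⟨c, hc⟩ := hxy
  refine ⟨c, ?_⟩
  -- key: vecMul c A = δ_y - δ_x
  have hu : ∀ i, Matrix.vecMul c A i
      = (if i = y then 1 else 0) - (if i = x then 1 else 0) := by
    intro i
    have := congrArg (FreeAbelianGroup.coeff i) hc
    simp only [map_sum, map_zsmul, map_add, map_neg] at this
    have hcoe : ∀ z : Fin v, FreeAbelianGroup.coeff i (FreeAbelianGroup.of z)
        = if i = z then 1 else 0 := by
      intro z
      simp [FreeAbelianGroup.coeff, FreeAbelianGroup.toFinsupp_of,
        Finsupp.single_apply, eq_comm]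
    simp only [map_sum, hcoe] at this
    rw [Matrix.vecMul, dotProduct]
    simp only [hA, Matrix.of_apply]
    rw [sub_eq_neg_add, ← this]
    congr 1
    ext j
    rw [smul_eq_mul]
    congr 1
    simp [Finset.sum_ite_eq, eq_comm]
  have key : Matrix.vecMul c (A * A.transpose) = Matrix.vecMul (Matrix.vecMul c A) A.transpose := by
    rw [Matrix.vecMul_vecMul]
  rw [key, Matrix.vecMul_transpose, dotProduct_comm,
    Matrix.dotProduct_mulVec]
  have : ∀ i, Matrix.vecMul c A i * Matrix.vecMul c A i
      = (if i = y then 1 else 0) + (if i = x then 1 else 0) := by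
    intro i
    rw [hu i]
    by_cases hiy : i = y <;> by_cases hix : i = x
    · exact absurd (hix.symm.trans hiy) hne
    all_goals simp [hiy, hix, hne, Ne.symm hne]
  rw [dotProduct]
  simp only [this]
  rw [Finset.sum_add_distrib]
  simp
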